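/- arXiv:2409.06068 — 5 statements merged into one kernel-verified Lean document; each statement's English description precedes it below -/
import Mathlib

section
/- Let r₁, r₂ be nonzero points in ℝ² with angle θ ∈ (π/3, π/2) between them at the origin, and set t = |r₂|/|r₁|. Then |r₁ - r₂| > max(|r₁|, |r₂|) if and only if 2 cos θ < t < 1/(2 cos θ). -/
open Real

/-- For nonzero planar points with angle `θ ∈ (π/3, π/2)` between them and
`t = ‖r₂‖/‖r₁‖`, the two points are strictly closer to the origin than to each
other iff `2 cos θ < t < 1/(2 cos θ)`. -/
theorem closer_iff_ratio_mem
    (r₁ r₂ : EuclideanSpace ℝ (Fin 2)) (h₁ : r₁ ≠ 0) (h₂ : r₂ ≠ 0)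
    (θ t : ℝ) (hθ : θ = InnerProductGeometry.angle r₁ r₂)
    (hθI : θ ∈ Set.Ioo (π / 3) (π / 2)) (ht : t = ‖r₂‖ / ‖r₁‖) :
    ‖r₁ - r₂‖ > max ‖r₁‖ ‖r₂‖ ↔ 2 * cos θ < t ∧ t < 1 / (2 * cos θ) := by
  have ha : (0:ℝ) < ‖r₁‖ := norm_pos_iff.mpr h₁
  have hb : (0:ℝ) < ‖r₂‖ := norm_pos_iff.mpr h₂
  have hd : (0:ℝ) ≤ ‖r₁ - r₂‖ := norm_nonneg _
  have hcpos : 0 < cos θ := by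
    apply Real.cos_pos_of_mem_Ioo
    constructor
    · have : (0:ℝ) < π / 3 := by positivity
      linarith [hθI.1, Real.pi_pos]
    · exact hθI.2
  have h2c : 0 < 2 * cos θ := by linarith
  have hinner : (inner ℝ r₁ r₂ : ℝ) = cos θ * (‖r₁‖ * ‖r₂‖) := by
    rw [hθ, InnerProductGeometry.cos_angle_mul_norm_mul_norm]
  have hsq : ‖r₁ - r₂‖ ^ 2 = ‖r₁‖ ^ 2 + ‖r₂‖ ^ 2 - 2 * (cos θ * (‖r₁‖ * ‖r₂‖)) := by
    rw [norm_sub_sq_real, hinner]; ring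
  rw [gt_iff_lt, max_lt_iff, ht, lt_div_iff₀ ha, div_lt_div_iff₀ ha h2c]
  constructor
  · rintro ⟨hA, hB⟩
    constructor
    · nlinarith
    · nlinarith
  · rintro ⟨hA, hB⟩
    constructor
    · nlinarith [sq_nonneg (‖r₁ - r₂‖ - ‖r₁‖)]
    · nlinarith [sq_nonneg (‖r₁ - r₂‖ - ‖r₂‖)]
end

section
/- If r₁, r₂ ∈ ℝ² are nonzero and strictly closer to the origin than to each other, with θ the angle between them and t = |r₂|/|r₁|, then 2 cos θ < min(t, 1/t). Consequently θ > π/3, and if additionally θ < π/2 then 2 cos θ < t < 1/(2 cos θ). -/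
open Real

/-- If two nonzero planar points are strictly closer to the origin than to each other,
with `θ` the angle between them and `t = ‖r₂‖/‖r₁‖`, then `2 cos θ < min t (1/t)`;
consequently `θ > π/3`, and if moreover `θ < π/2` then `2cos θ < t < 1/(2cos θ)`. -/
theorem ratio_bounds_of_closer
    (r₁ r₂ : EuclideanSpace ℝ (Fin 2)) (h₁ : r₁ ≠ 0) (h₂ : r₂ ≠ 0)
    (θ t : ℝ) (hθ : θ = InnerProductGeometry.angle r₁ r₂) (ht : t = ‖r₂‖ / ‖r₁‖)
    (h : ‖r₁ - r₂‖ > max ‖r₁‖ ‖r₂‖) :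
    2 * cos θ < min t (1 / t) ∧ θ > π / 3 ∧
      (θ < π / 2 → 2 * cos θ < t ∧ t < 1 / (2 * cos θ)) := by
  have ha : (0:ℝ) < ‖r₁‖ := norm_pos_iff.mpr h₁
  have hb : (0:ℝ) < ‖r₂‖ := norm_pos_iff.mpr h₂
  set a := ‖r₁‖ with haa
  set b := ‖r₂‖ with hbb
  have hcos : cos θ = inner ℝ r₁ r₂ / (a * b) := by
    rw [hθ]; exact InnerProductGeometry.cos_angle r₁ r₂
  set ip : ℝ := inner ℝ r₁ r₂ with hip
  have hsq : ‖r₁ - r₂‖ ^ 2 = a ^ 2 - 2 * ip + b ^ 2 := by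
    simpa [hip] using @norm_sub_sq_real (EuclideanSpace ℝ (Fin 2)) _ _ r₁ r₂
  have hga : ‖r₁ - r₂‖ > a := lt_of_le_of_lt (le_max_left _ _) h
  have hgb : ‖r₁ - r₂‖ > b := lt_of_le_of_lt (le_max_right _ _) h
  have hb2 : b ^ 2 > 2 * ip := by nlinarith [hsq, hga, ha]
  have ha2 : a ^ 2 > 2 * ip := by nlinarith [hsq, hgb, hb]
  have hcval : 2 * cos θ * (a * b) = 2 * ip := by
    rw [hcos]; field_simp
  have ht0 : 0 < t := by rw [ht]; positivity
  have h1 : 2 * cos θ < t := by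
    rw [ht]
    rw [lt_div_iff₀ ha]
    nlinarith [hb2, hcval, ha, hb]
  have h2 : 2 * cos θ < 1 / t := by
    rw [ht]
    rw [one_div_div, lt_div_iff₀ hb]
    nlinarith [ha2, hcval, ha, hb]
  have hmin : 2 * cos θ < min t (1 / t) := lt_min h1 h2
  have hclt : cos θ < 1 / 2 := by
    rcases le_total t 1 with hle | hle
    · nlinarith [h1]
    · have : 1 / t ≤ 1 := by rw [div_le_one ht0]; linarith
      nlinarith [h2]
  have hθ0 : 0 ≤ θ := hθ ▸ InnerProductGeometry.angle_nonneg r₁ r₂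
  have hθπ : θ ≤ π := hθ ▸ InnerProductGeometry.angle_le_pi r₁ r₂
  have hθ3 : θ > π / 3 := by
    by_contra hcon
    push_neg at hcon
    have hge : cos (π/3) ≤ cos θ :=
      Real.strictAntiOn_cos.le_iff_ge
        ⟨by linarith [pi_pos], by linarith [pi_pos]⟩ ⟨hθ0, hθπ⟩ |>.mpr hcon
    rw [Real.cos_pi_div_three] at hge
    linarith
  refine ⟨hmin, hθ3, fun hlt => ⟨h1, ?_⟩⟩
  have hcpos : 0 < cos θ := Real.cos_pos_of_mem_Ioo ⟨by linarith [pi_pos], hlt⟩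
  rw [lt_div_iff₀ (by linarith : (0:ℝ) < 2 * cos θ)]
  calc t * (2 * cos θ) < t * (1 / t) := by
        exact mul_lt_mul_of_pos_left h2 ht0
    _ = 1 := by field_simp
end

section
/- The Jacobian determinant of the map F(θ, θ₁, …, θ_{n−1}, r, t₁, …, t_{n−1}) = (r₁, …, rₙ) ∈ (ℝ²)ⁿ, where rᵢ = (ρᵢ cos φᵢ, ρᵢ sin φᵢ) with φᵢ = θ + Σ_{k<i} θₖ and ρᵢ = r ∏_{k<i} tₖ, has absolute value r^{2n−1} · t₁^{2n−3} · t₂^{2n−5} ⋯ t_{n−2}³ · t_{n−1}. -/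
open Real Finset

namespace TaoWuAux

/-- angle -/
noncomputable def phi (y : ℕ → ℝ) (i : ℕ) : ℝ := ∑ k ∈ Finset.Icc 0 i, y k
/-- radius -/
noncomputable def rho (n : ℕ) (y : ℕ → ℝ) (i : ℕ) : ℝ := ∏ k ∈ Finset.Icc 0 i, y (n + k)
/-- derivative coefficient of rho -/
noncomputable def cc (n : ℕ) (y : ℕ → ℝ) (i k : ℕ) : ℝ :=
  ∏ j ∈ (Finset.Icc 0 i).erase k, y (n + j)

/-- matrix entry -/
noncomputable def Ment (n : ℕ) (y : ℕ → ℝ) (i s l : ℕ) : ℝ :=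
  if l < n then
    (if l ≤ i then rho n y i * (if s = 0 then -Real.sin (phi y i) else Real.cos (phi y i)) else 0)
  else
    (if l - n ≤ i then
      cc n y i (l - n) * (if s = 0 then Real.cos (phi y i) else Real.sin (phi y i)) else 0)

/-- the Jacobian matrix -/
noncomputable def Mmat (n : ℕ) (y : ℕ → ℝ) : Matrix (Fin (2*n)) (Fin (2*n)) ℝ :=
  fun j l => Ment n y ((j : ℕ) / 2) ((j : ℕ) % 2) (l : ℕ)

/-- row reindexing -/
def eRow (n : ℕ) : (Fin n ⊕ Fin n) ≃ Fin (2*n) where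
  toFun := Sum.elim (fun i => ⟨2*(i:ℕ), by have := i.isLt; omega⟩)
    (fun i => ⟨2*(i:ℕ)+1, by have := i.isLt; omega⟩)
  invFun := fun j => if h : (j:ℕ) % 2 = 0 then .inl ⟨(j:ℕ)/2, by have := j.isLt; omega⟩
    else .inr ⟨(j:ℕ)/2, by have := j.isLt; omega⟩
  left_inv := by
    rintro (i | i) <;> dsimp only [Sum.elim_inl, Sum.elim_inr]
    · rw [dif_pos (by omega)]
      congr 1; exact Fin.ext (by show 2*(i:ℕ)/2 = i; omega)
    · rw [dif_neg (by omega)]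
      congr 1; exact Fin.ext (by show (2*(i:ℕ)+1)/2 = i; omega)
  right_inv := by
    intro j
    dsimp only
    by_cases h : (j:ℕ) % 2 = 0
    · rw [dif_pos h]; exact Fin.ext (by show 2*((j:ℕ)/2) = j; omega)
    · rw [dif_neg h]; exact Fin.ext (by show 2*((j:ℕ)/2)+1 = j; omega)

/-- column reindexing -/
def eCol (n : ℕ) : (Fin n ⊕ Fin n) ≃ Fin (2*n) where
  toFun := Sum.elim (fun k => ⟨(k:ℕ), by have := k.isLt; omega⟩)
    (fun k => ⟨n + (k:ℕ), by have := k.isLt; omega⟩)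
  invFun := fun l => if h : (l:ℕ) < n then .inl ⟨(l:ℕ), h⟩
    else .inr ⟨(l:ℕ) - n, by have := l.isLt; omega⟩
  left_inv := by
    rintro (k | k) <;> dsimp only [Sum.elim_inl, Sum.elim_inr]
    · rw [dif_pos (by exact k.isLt)]
    · rw [dif_neg (by omega)]
      congr 1; exact Fin.ext (by show n+(k:ℕ)-n = k; omega)
  right_inv := by
    intro l
    dsimp only
    by_cases h : (l:ℕ) < n
    · rw [dif_pos h]; rfl
    · rw [dif_neg h]; exact Fin.ext (by show n+((l:ℕ)-n) = l; have := l.isLt; omega)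

/-- sum-to-prod equiv -/
def spEquiv (n : ℕ) : (Fin n ⊕ Fin n) ≃ (Fin 2 × Fin n) where
  toFun := Sum.elim (fun i => (0, i)) (fun i => (1, i))
  invFun := fun p => if p.1 = 0 then .inl p.2 else .inr p.2
  left_inv := by rintro (i | i) <;> simp
  right_inv := by rintro ⟨s, i⟩; fin_cases s <;> simp

theorem abs_det_submatrix {I J : Type*} [DecidableEq I] [Fintype I] [DecidableEq J] [Fintype J]
    (M : Matrix I I ℝ) (e f : J ≃ I) : |(M.submatrix e f).det| = |M.det| := by
  have h : M.submatrix e f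
      = ((M.submatrix f f).submatrix (⇑(e.trans f.symm)) id : Matrix J J ℝ) := by
    ext p q; simp [Matrix.submatrix_apply]
  rw [h, Matrix.det_permute, Matrix.det_submatrix_equiv_self, abs_mul]
  rcases Int.units_eq_one_or (Equiv.Perm.sign (e.trans f.symm)) with hs | hs <;>
    simp [hs]

theorem prod_prod_range (f : ℕ → ℝ) (n : ℕ) :
    ∏ i ∈ range n, ∏ j ∈ range i, f j = ∏ j ∈ range n, f j ^ (n - (j+1)) := by
  rw [Finset.prod_comm' (s' := fun j => Ico (j+1) n) (t' := range n)
    (by intro i j; simp; omega)]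
  exact Finset.prod_congr rfl fun j _ => by rw [Finset.prod_const, Nat.card_Ico]

theorem prod_prod_range_succ (f : ℕ → ℝ) (n : ℕ) :
    ∏ i ∈ range n, ∏ j ∈ range (i+1), f j = ∏ j ∈ range n, f j ^ (n - j) := by
  rw [Finset.prod_comm' (s' := fun j => Ico j n) (t' := range n)
    (by intro i j; simp; omega)]
  exact Finset.prod_congr rfl fun j _ => by rw [Finset.prod_const, Nat.card_Ico]

end TaoWuAux

namespace TaoWuAux

theorem absdet (n : ℕ) (hn : 1 ≤ n) (y : ℕ → ℝ) (hr : 0 < y n)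
    (ht : ∀ k ∈ Finset.Icc 1 (n-1), 0 < y (n+k)) :
    |(Mmat n y).det| = y n ^ (2*n-1) * ∏ k ∈ Finset.Icc 1 (n-1), y (n+k) ^ (2*(n-k)-1) := by
  have htp : ∀ k, k < n → 0 < y (n+k) := by
    intro k hk
    rcases Nat.eq_zero_or_pos k with rfl | h
    · simpa using hr
    · exact ht k (by simp; omega)
  set A : Matrix (Fin n) (Fin n) ℝ :=
    fun i k => if (k:ℕ) ≤ (i:ℕ) then cc n y i k else 0 with hA
  set B : Matrix (Fin n) (Fin n) ℝ :=
    fun i k => if (k:ℕ) ≤ (i:ℕ) then rho n y i else 0 with hB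
  set Rot : Matrix (Fin n ⊕ Fin n) (Fin n ⊕ Fin n) ℝ := Matrix.fromBlocks
    (Matrix.diagonal fun i : Fin n => Real.cos (phi y i))
    (Matrix.diagonal fun i : Fin n => -Real.sin (phi y i))
    (Matrix.diagonal fun i : Fin n => Real.sin (phi y i))
    (Matrix.diagonal fun i : Fin n => Real.cos (phi y i)) with hRot
  set K : Matrix (Fin n ⊕ Fin n) (Fin n ⊕ Fin n) ℝ := Matrix.fromBlocks 0 A B 0 with hK
  have claim1 : (Mmat n y).submatrix (eRow n) (eCol n) = Rot * K := by
    rw [hRot, hK, Matrix.fromBlocks_multiply]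
    simp only [Matrix.mul_zero, zero_add, add_zero]
    ext p q
    rcases p with i | i <;> rcases q with k | k <;>
      simp only [Matrix.submatrix_apply, eRow, eCol, Equiv.coe_fn_mk, Sum.elim_inl, Sum.elim_inr,
        Matrix.fromBlocks_apply₁₁, Matrix.fromBlocks_apply₁₂, Matrix.fromBlocks_apply₂₁,
        Matrix.fromBlocks_apply₂₂, Matrix.diagonal_mul, Mmat, Ment] <;>
      [ (erw [if_pos k.isLt]; have e1 : 2*(i:ℕ)/2 = (i:ℕ) := by omega
         have e2 : 2*(i:ℕ)%2 = 0 := by omega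
         erw [e1, e2, if_pos rfl]; simp only [hA, hB]; split_ifs <;> simp_all <;> ring);
        (erw [if_neg (show ¬ (n+(k:ℕ) < n) by omega), show n+(k:ℕ)-n = (k:ℕ) by omega]
         have e1 : 2*(i:ℕ)/2 = (i:ℕ) := by omega
         have e2 : 2*(i:ℕ)%2 = 0 := by omega
         erw [e1, e2, if_pos rfl]; simp only [hA, hB]; split_ifs <;> simp_all <;> ring);
        (erw [if_pos k.isLt]; have e1 : (2*(i:ℕ)+1)/2 = (i:ℕ) := by omega
         have e2 : (2*(i:ℕ)+1)%2 = 1 := by omega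
         erw [e1, e2, if_neg one_ne_zero]; simp only [hA, hB]; split_ifs <;> simp_all <;> ring);
        (erw [if_neg (show ¬ (n+(k:ℕ) < n) by omega), show n+(k:ℕ)-n = (k:ℕ) by omega]
         have e1 : (2*(i:ℕ)+1)/2 = (i:ℕ) := by omega
         have e2 : (2*(i:ℕ)+1)%2 = 1 := by omega
         erw [e1, e2, if_neg one_ne_zero]; simp only [hA, hB]; split_ifs <;> simp_all <;> ring)]
  have hRotdet : Rot.det = 1 := by
    have hrb : Rot = (Matrix.blockDiagonal fun i : Fin n =>
        !![Real.cos (phi y i), -Real.sin (phi y i);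
           Real.sin (phi y i), Real.cos (phi y i)]).submatrix (spEquiv n) (spEquiv n) := by
      ext p q
      rcases p with i | i <;> rcases q with j | j <;>
        simp [spEquiv, Matrix.blockDiagonal_apply, Matrix.diagonal_apply, hRot] <;>
        split_ifs <;> simp_all
    rw [hrb, Matrix.det_submatrix_equiv_self, Matrix.det_blockDiagonal]
    have h1 : ∀ i : Fin n, (!![Real.cos (phi y i), -Real.sin (phi y i);
        Real.sin (phi y i), Real.cos (phi y i)]).det = 1 := fun i => by
      rw [Matrix.det_fin_two_of]
      have := Real.sin_sq_add_cos_sq (phi y i)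
      nlinarith [this]
    simp [h1]
  have hKdet : |K.det| = |A.det * B.det| := by
    have hk2 : K = (Matrix.fromBlocks A 0 0 B).submatrix id ⇑(Equiv.sumComm (Fin n) (Fin n)) := by
      ext p q
      rcases p with i | i <;> rcases q with k | k <;>
        simp [Matrix.submatrix_apply, hK]
    rw [hk2, Matrix.det_permute', Matrix.det_fromBlocks_zero₂₁, abs_mul]
    rcases Int.units_eq_one_or (Equiv.Perm.sign (Equiv.sumComm (Fin n) (Fin n))) with hs | hs <;>
      simp [hs, abs_mul]
  have hAdet : A.det = ∏ i : Fin n, cc n y i i := by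
    rw [Matrix.det_of_lowerTriangular A (by
      intro i j hij
      have hj : (i:ℕ) < (j:ℕ) := hij
      exact if_neg (by omega))]
    exact Finset.prod_congr rfl fun i _ => if_pos (le_refl _)
  have hBdet : B.det = ∏ i : Fin n, rho n y i := by
    rw [Matrix.det_of_lowerTriangular B (by
      intro i j hij
      have hj : (i:ℕ) < (j:ℕ) := hij
      exact if_neg (by omega))]
    exact Finset.prod_congr rfl fun i _ => if_pos (le_refl _)
  have hccpos : ∀ i : Fin n, 0 < cc n y i i := fun i =>
    Finset.prod_pos (fun j hj => htp j (by
      have := Finset.mem_of_mem_erase hj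
      simp at this
      omega))
  have hrhopos : ∀ i : Fin n, 0 < rho n y i := fun i =>
    Finset.prod_pos (fun j hj => htp j (by simp at hj; omega))
  have harith : (∏ i : Fin n, cc n y i i) * (∏ i : Fin n, rho n y i)
      = y n ^ (2*n-1) * ∏ k ∈ Finset.Icc 1 (n-1), y (n+k) ^ (2*(n-k)-1) := by
    have h1 : ∀ i : Fin n, cc n y i i = ∏ j ∈ range (i:ℕ), y (n+j) := fun i => by
      rw [cc, Finset.Icc_erase_right, Nat.Ico_zero_eq_range]
    have h2 : ∀ i : Fin n, rho n y i = ∏ j ∈ range ((i:ℕ)+1), y (n+j) := fun i => by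
      rw [rho, ← Finset.Ico_add_one_right_eq_Icc, Nat.Ico_zero_eq_range]
    calc (∏ i : Fin n, cc n y i i) * (∏ i : Fin n, rho n y i)
        = (∏ i ∈ range n, ∏ j ∈ range i, y (n+j))
            * (∏ i ∈ range n, ∏ j ∈ range (i+1), y (n+j)) := by
          rw [Finset.prod_congr rfl (fun i _ => h1 i), Finset.prod_congr rfl (fun i _ => h2 i),
            Fin.prod_univ_eq_prod_range (fun m => ∏ j ∈ range m, y (n+j)) n,
            Fin.prod_univ_eq_prod_range (fun m => ∏ j ∈ range (m+1), y (n+j)) n]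
      _ = (∏ j ∈ range n, y (n+j) ^ (n-(j+1))) * (∏ j ∈ range n, y (n+j) ^ (n-j)) := by
          rw [prod_prod_range, prod_prod_range_succ]
      _ = ∏ j ∈ range n, y (n+j) ^ (2*(n-j)-1) := by
          rw [← Finset.prod_mul_distrib]
          exact Finset.prod_congr rfl fun j hj => by
            rw [← pow_add]; congr 1; simp at hj; omega
      _ = y n ^ (2*n-1) * ∏ k ∈ Finset.Icc 1 (n-1), y (n+k) ^ (2*(n-k)-1) := by
          have hins : range n = insert 0 (Finset.Icc 1 (n-1)) := by ext a; simp; omega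
          rw [hins, Finset.prod_insert (by simp)]
          norm_num
  have hpos : 0 < A.det * B.det := by
    rw [hAdet, hBdet]
    exact mul_pos (Finset.prod_pos fun i _ => hccpos i) (Finset.prod_pos fun i _ => hrhopos i)
  calc |(Mmat n y).det| = |((Mmat n y).submatrix (eRow n) (eCol n)).det| :=
        (abs_det_submatrix _ _ _).symm
    _ = |Rot.det| * |K.det| := by rw [claim1, Matrix.det_mul, abs_mul]
    _ = A.det * B.det := by rw [hRotdet, hKdet, abs_one, one_mul, abs_of_pos hpos]
    _ = _ := by rw [hAdet, hBdet, harith]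

end TaoWuAux

namespace TaoWuAux

/-- embedding of naturals into `Fin (2*n)` -/
def emb (n : ℕ) (hn : 0 < n) (k : ℕ) : Fin (2*n) := ⟨k % (2*n), Nat.mod_lt _ (by omega)⟩

/-- the clean form of the map -/
noncomputable def Fnice (n : ℕ) (hn : 0 < n) : (Fin (2*n) → ℝ) → Fin (2*n) → ℝ := fun v j =>
  (∏ k ∈ Finset.Icc 0 ((j:ℕ)/2), v (emb n hn (n+k))) *
  (if (j:ℕ)%2 = 0 then Real.cos (∑ k ∈ Finset.Icc 0 ((j:ℕ)/2), v (emb n hn k))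
   else Real.sin (∑ k ∈ Finset.Icc 0 ((j:ℕ)/2), v (emb n hn k)))

theorem hasfd (n : ℕ) (hn : 0 < n) (x : Fin (2*n) → ℝ) (y : ℕ → ℝ)
    (hy : y = fun k => if h : k < 2*n then x ⟨k, h⟩ else 0) :
    HasFDerivAt (Fnice n hn)
      (LinearMap.toContinuousLinearMap (Matrix.toLin' (Mmat n y))) x := by
  have hxy : ∀ k, k < 2*n → x (emb n hn k) = y k := by
    intro k h
    rw [hy]
    dsimp only
    rw [dif_pos h]
    congr 1
    exact Fin.ext (Nat.mod_eq_of_lt h)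
  apply hasFDerivAt_pi''
  intro j
  have hi : (j:ℕ)/2 < n := by have := j.isLt; omega
  have hP : HasFDerivAt (fun v : Fin (2*n) → ℝ => ∏ k ∈ Finset.Icc 0 ((j:ℕ)/2), v (emb n hn (n+k)))
      (∑ k ∈ Finset.Icc 0 ((j:ℕ)/2),
        (∏ j' ∈ (Finset.Icc 0 ((j:ℕ)/2)).erase k, x (emb n hn (n+j'))) •
          ContinuousLinearMap.proj (R := ℝ) (emb n hn (n+k))) x :=
    HasFDerivAt.finset_prod (fun k _ => hasFDerivAt_apply (emb n hn (n+k)) x)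
  have hS : HasFDerivAt (fun v : Fin (2*n) → ℝ => ∑ k ∈ Finset.Icc 0 ((j:ℕ)/2), v (emb n hn k))
      (∑ k ∈ Finset.Icc 0 ((j:ℕ)/2), ContinuousLinearMap.proj (R := ℝ) (φ := fun _ => ℝ) (emb n hn k)) x :=
    by apply HasFDerivAt.fun_sum; intro k _; exact hasFDerivAt_apply (emb n hn k) x
  have hPx : (∏ k ∈ Finset.Icc 0 ((j:ℕ)/2), x (emb n hn (n+k))) = rho n y ((j:ℕ)/2) :=
    Finset.prod_congr rfl fun k hk => hxy _ (by simp at hk; omega)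
  have hSx : (∑ k ∈ Finset.Icc 0 ((j:ℕ)/2), x (emb n hn k)) = phi y ((j:ℕ)/2) :=
    Finset.sum_congr rfl fun k hk => hxy _ (by simp at hk; omega)
  have hcc : ∀ k ∈ Finset.Icc 0 ((j:ℕ)/2),
      (∏ j' ∈ (Finset.Icc 0 ((j:ℕ)/2)).erase k, x (emb n hn (n+j'))) = cc n y ((j:ℕ)/2) k :=
    fun k _ => Finset.prod_congr rfl fun j' hj' => hxy _ (by
      have := Finset.mem_of_mem_erase hj'
      simp at this
      omega)
  -- the right-hand side sum, rewritten
  have hsum1 : ∀ v : Fin (2*n) → ℝ,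
      (∑ l : Fin (2*n), Mmat n y j l * v l)
      = (∑ m ∈ Finset.Icc 0 ((j:ℕ)/2),
            (rho n y ((j:ℕ)/2) * (if (j:ℕ)%2 = 0 then -Real.sin (phi y ((j:ℕ)/2))
              else Real.cos (phi y ((j:ℕ)/2)))) * v (emb n hn m))
        + (∑ k ∈ Finset.Icc 0 ((j:ℕ)/2),
            (cc n y ((j:ℕ)/2) k * (if (j:ℕ)%2 = 0 then Real.cos (phi y ((j:ℕ)/2))
              else Real.sin (phi y ((j:ℕ)/2)))) * v (emb n hn (n+k))) := by
    intro v
    have step1 : (∑ l : Fin (2*n), Mmat n y j l * v l)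
        = ∑ m ∈ range (2*n), Ment n y ((j:ℕ)/2) ((j:ℕ)%2) m * v (emb n hn m) := by
      rw [← Fin.sum_univ_eq_sum_range (fun m => Ment n y ((j:ℕ)/2) ((j:ℕ)%2) m * v (emb n hn m)) (2*n)]
      refine Finset.sum_congr rfl fun l _ => ?_
      have : emb n hn (l:ℕ) = l := Fin.ext (Nat.mod_eq_of_lt l.isLt)
      rw [this]
      rfl
    rw [step1, Finset.range_eq_Ico, ← Finset.sum_Ico_consecutive _ (Nat.zero_le n) (by omega : n ≤ 2*n)]
    congr 1
    · have hfe : (Finset.Ico 0 n).filter (fun m => m ≤ (j:ℕ)/2) = Finset.Icc 0 ((j:ℕ)/2) := by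
        ext a; simp; omega
      trans (∑ m ∈ Finset.Ico 0 n, (if m ≤ (j:ℕ)/2 then
              (rho n y ((j:ℕ)/2) * (if (j:ℕ)%2 = 0 then -Real.sin (phi y ((j:ℕ)/2))
                else Real.cos (phi y ((j:ℕ)/2)))) * v (emb n hn m) else 0))
      · refine Finset.sum_congr rfl fun m hm => ?_
        have hmn : m < n := by simp at hm; omega
        rw [Ment, if_pos hmn, ite_mul, zero_mul]
      · rw [← Finset.sum_filter, hfe]
    · rw [Finset.sum_Ico_eq_sum_range, show 2*n - n = n by omega]
      have hfe : (range n).filter (fun m => m ≤ (j:ℕ)/2) = Finset.Icc 0 ((j:ℕ)/2) := by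
        ext a; simp; omega
      trans (∑ m ∈ range n, (if m ≤ (j:ℕ)/2 then
              (cc n y ((j:ℕ)/2) m * (if (j:ℕ)%2 = 0 then Real.cos (phi y ((j:ℕ)/2))
                else Real.sin (phi y ((j:ℕ)/2)))) * v (emb n hn (n+m)) else 0))
      · refine Finset.sum_congr rfl fun m hm => ?_
        rw [Ment, if_neg (by omega), show n+m-n = m by omega, ite_mul, zero_mul]
      · rw [← Finset.sum_filter, hfe]
  by_cases hj2 : (j:ℕ)%2 = 0
  · have hfn : (fun v => Fnice n hn v j)
        = (fun v : Fin (2*n) → ℝ => (∏ k ∈ Finset.Icc 0 ((j:ℕ)/2), v (emb n hn (n+k))) *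
            Real.cos (∑ k ∈ Finset.Icc 0 ((j:ℕ)/2), v (emb n hn k))) := by
      funext v
      simp only [Fnice, if_pos hj2]
    rw [hfn]
    refine (hP.mul hS.cos).congr_fderiv ?_
    ext v
    simp only [ContinuousLinearMap.add_apply, ContinuousLinearMap.coe_smul', Pi.smul_apply,
      ContinuousLinearMap.coe_comp', Function.comp_apply, ContinuousLinearMap.proj_apply,
      ContinuousLinearMap.sum_apply, ContinuousLinearMap.smul_apply, smul_eq_mul,
      LinearMap.coe_toContinuousLinearMap', Matrix.toLin'_apply, Matrix.mulVec,
      dotProduct, hPx, hSx]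
    rw [hsum1 v]
    simp only [if_pos hj2]
    simp only [Finset.mul_sum]
    congr 1
    · exact Finset.sum_congr rfl fun m hm => by ring
    · exact Finset.sum_congr rfl fun k hk => by rw [hcc k hk]; ring
  · have hfn : (fun v => Fnice n hn v j)
        = (fun v : Fin (2*n) → ℝ => (∏ k ∈ Finset.Icc 0 ((j:ℕ)/2), v (emb n hn (n+k))) *
            Real.sin (∑ k ∈ Finset.Icc 0 ((j:ℕ)/2), v (emb n hn k))) := by
      funext v
      simp only [Fnice, if_neg hj2]
    rw [hfn]
    refine (hP.mul hS.sin).congr_fderiv ?_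
    ext v
    simp only [ContinuousLinearMap.add_apply, ContinuousLinearMap.coe_smul', Pi.smul_apply,
      ContinuousLinearMap.coe_comp', Function.comp_apply, ContinuousLinearMap.proj_apply,
      ContinuousLinearMap.sum_apply, ContinuousLinearMap.smul_apply, smul_eq_mul,
      LinearMap.coe_toContinuousLinearMap', Matrix.toLin'_apply, Matrix.mulVec,
      dotProduct, hPx, hSx]
    rw [hsum1 v]
    simp only [if_neg hj2]
    simp only [Finset.mul_sum]
    congr 1
    · exact Finset.sum_congr rfl fun m hm => by ring
    · exact Finset.sum_congr rfl fun k hk => by rw [hcc k hk]; ring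

end TaoWuAux

/-- The Jacobian determinant of the Tao–Wu change of variables
`F(θ, θ₁, …, θ_{n−1}, r, t₁, …, t_{n−1}) = (r₁, …, rₙ)`, where
`rᵢ = (ρᵢ cos φᵢ, ρᵢ sin φᵢ)` with `φᵢ = θ + Σ_{k<i} θₖ` and `ρᵢ = r ∏_{k<i} tₖ`,
has absolute value `r^{2n−1} t₁^{2n−3} t₂^{2n−5} ⋯ t_{n−2}³ t_{n−1}`.
Coordinates on the domain: `x 0 = θ`, `x k = θₖ` for `1 ≤ k ≤ n−1`, `x n = r`,
`x (n+k) = tₖ` for `1 ≤ k ≤ n−1`; on the target, coordinates `2i, 2i+1` are the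
Cartesian coordinates of `r_{i+1}`. -/
theorem taoWu_jacobian (n : ℕ) (hn : 1 ≤ n)
    (F : (Fin (2 * n) → ℝ) → (Fin (2 * n) → ℝ))
    (hF : F = fun (x : Fin (2 * n) → ℝ) (j : Fin (2 * n)) =>
      let y : ℕ → ℝ := fun k => if h : k < 2 * n then x ⟨k, h⟩ else 0
      let i : ℕ := (j : ℕ) / 2
      let φ : ℝ := y 0 + ∑ k ∈ Finset.Icc 1 i, y k
      let ρ : ℝ := y n * ∏ k ∈ Finset.Icc 1 i, y (n + k)
      if (j : ℕ) % 2 = 0 then ρ * cos φ else ρ * sin φ)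
    (x : Fin (2 * n) → ℝ)
    (y : ℕ → ℝ) (hy : y = fun k => if h : k < 2 * n then x ⟨k, h⟩ else 0)
    (hr : 0 < y n) (ht : ∀ k ∈ Finset.Icc 1 (n - 1), 0 < y (n + k)) :
    |(fderiv ℝ F x).det| =
      y n ^ (2 * n - 1) * ∏ k ∈ Finset.Icc 1 (n - 1), y (n + k) ^ (2 * (n - k) - 1) := by
  have hn0 : 0 < n := hn
  have hFn : F = TaoWuAux.Fnice n hn0 := by
    rw [hF]
    funext v j
    simp only [TaoWuAux.Fnice]
    have hI : Finset.Icc 0 ((j:ℕ)/2) = insert 0 (Finset.Icc 1 ((j:ℕ)/2)) := by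
      ext a; simp; omega
    have hprod : (if h : n < 2*n then v ⟨n, h⟩ else 0) *
        ∏ k ∈ Finset.Icc 1 ((j:ℕ)/2), (if h : n+k < 2*n then v ⟨n+k, h⟩ else 0)
        = ∏ k ∈ Finset.Icc 0 ((j:ℕ)/2), v (TaoWuAux.emb n hn0 (n+k)) := by
      rw [hI, Finset.prod_insert (by simp)]
      congr 1
      · rw [dif_pos (by omega : n < 2*n)]
        congr 1
        exact Fin.ext (by show n = (n+0) % (2*n); rw [Nat.mod_eq_of_lt (by omega)] <;> omega)
      · refine Finset.prod_congr rfl fun k hk => ?_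
        have hj : (j:ℕ)/2 < n := by have := j.isLt; omega
        have hk' : 1 ≤ k ∧ k ≤ (j:ℕ)/2 := by simpa using hk
        rw [dif_pos (by omega : n+k < 2*n)]
        congr 1
        exact Fin.ext (by show n+k = (n+k) % (2*n); rw [Nat.mod_eq_of_lt (by omega)] <;> omega)
    have hsum : (if h : 0 < 2*n then v ⟨0, h⟩ else 0) +
        ∑ k ∈ Finset.Icc 1 ((j:ℕ)/2), (if h : k < 2*n then v ⟨k, h⟩ else 0)
        = ∑ k ∈ Finset.Icc 0 ((j:ℕ)/2), v (TaoWuAux.emb n hn0 k) := by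
      rw [hI, Finset.sum_insert (by simp)]
      congr 1
      · rw [dif_pos (by omega : 0 < 2*n)]
        congr 1
      · refine Finset.sum_congr rfl fun k hk => ?_
        have hj : (j:ℕ)/2 < n := by have := j.isLt; omega
        have hk' : 1 ≤ k ∧ k ≤ (j:ℕ)/2 := by simpa using hk
        rw [dif_pos (by omega : k < 2*n)]
        congr 1
        exact Fin.ext (by show k = k % (2*n); rw [Nat.mod_eq_of_lt (by omega)] <;> omega)
    rw [hprod, hsum]
    split_ifs <;> ring
  rw [hFn]
  have hD := TaoWuAux.hasfd n hn0 x y hy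
  rw [hD.fderiv]
  have hdet : (LinearMap.toContinuousLinearMap (Matrix.toLin' (TaoWuAux.Mmat n y))).det
      = (TaoWuAux.Mmat n y).det := by
    rw [LinearMap.det_toContinuousLinearMap, LinearMap.det_toLin']
  rw [hdet]
  exact TaoWuAux.absdet n hn y hr ht
end

section
/- Let r₁, …, r₅ be the points in ℝ² where rᵢ has argument (i−1)·(2π/5) and magnitude (3/2)^{i−1}. Then r₅ fails to be strictly closer to the origin than to r₁: |r₅ − r₁| ≤ max(|r₅|, |r₁|). -/
open Real

lemma cos_theta_eq : Real.cos ((4:ℝ) * (2 * π / 5)) = (Real.sqrt 5 - 1) / 4 := by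
  have h : ((4:ℝ) * (2 * π / 5)) = 2*π - 2*(π/5) := by ring
  rw [h, Real.cos_two_pi_sub, Real.cos_two_mul, Real.cos_pi_div_five]
  have h5 : Real.sqrt 5 ^ 2 = 5 := Real.sq_sqrt (by norm_num)
  nlinarith [h5]

/-- In the configuration where `rᵢ` has argument `(i−1)·(2π/5)` and magnitude
`(3/2)^{i−1}`, the fifth point fails to be strictly closer to the origin than to the
first: `|r₅ − r₁| ≤ max(|r₅|, |r₁|)`. -/
theorem taoWu_region_counterexample_one
    (r : Fin 5 → ℂ)
    (hr : r = fun i : Fin 5 => (((3 / 2 : ℝ) ^ (i : ℕ) : ℝ) : ℂ) *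
      Complex.exp ((((i : ℕ) * (2 * π / 5) : ℝ) : ℂ) * Complex.I)) :
    ‖r 4 - r 0‖ ≤ max ‖r 4‖ ‖r 0‖ := by
  subst hr
  simp only
  have h4n : ((4 : Fin 5) : ℕ) = 4 := rfl
  have h0n : ((0 : Fin 5) : ℕ) = 0 := rfl
  set θ : ℝ := (4:ℝ) * (2 * π / 5) with hθ
  set a : ℝ := (3/2 : ℝ)^(((4:Fin 5)):ℕ) with ha
  have ha' : a = 81/16 := by rw [ha, h4n]; norm_num
  have hr0 : (((3 / 2 : ℝ) ^ (((0:Fin 5)) : ℕ) : ℝ) : ℂ) *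
      Complex.exp (((((0:Fin 5) : ℕ) * (2 * π / 5) : ℝ) : ℂ) * Complex.I) = 1 := by
    rw [h0n]; norm_num
  have hr4 : (((3 / 2 : ℝ) ^ (((4:Fin 5)) : ℕ) : ℝ) : ℂ) *
      Complex.exp (((((4:Fin 5) : ℕ) * (2 * π / 5) : ℝ) : ℂ) * Complex.I)
      = (a:ℂ) * Complex.exp ((θ:ℂ) * Complex.I) := by
    rw [ha, hθ, h4n]
    norm_num
  rw [hr0, hr4]
  have hsq : ‖(a:ℂ) * Complex.exp ((θ:ℂ) * Complex.I) - 1‖^2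
      = a^2 - 2*a*Real.cos θ + 1 := by
    rw [Complex.exp_mul_I]
    rw [Complex.sq_norm, Complex.normSq_apply]
    simp [Complex.cos_ofReal_re, Complex.sin_ofReal_re]
    have := Real.sin_sq_add_cos_sq θ
    nlinarith [this]
  have hcos : Real.cos θ = (Real.sqrt 5 - 1) / 4 := cos_theta_eq
  have hnorm4 : ‖(a:ℂ) * Complex.exp ((θ:ℂ) * Complex.I)‖ = a := by
    rw [norm_mul, Complex.norm_exp_ofReal_mul_I]
    simp [ha']
  have h5 : Real.sqrt 5 ≥ 2 := by
    nlinarith [Real.sq_sqrt (show (5:ℝ) ≥ 0 by norm_num),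
      Real.sqrt_nonneg 5]
  have key : ‖(a:ℂ) * Complex.exp ((θ:ℂ) * Complex.I) - 1‖^2 ≤ a^2 := by
    rw [hsq, hcos, ha']; nlinarith [h5]
  have hle : ‖(a:ℂ) * Complex.exp ((θ:ℂ) * Complex.I) - 1‖ ≤ a := by
    nlinarith [norm_nonneg ((a:ℂ) * Complex.exp ((θ:ℂ) * Complex.I) - 1),
      key, show (0:ℝ) ≤ a by rw [ha']; norm_num]
  rw [hnorm4] at *
  exact le_trans hle (le_max_left _ _)
end

section
/- Let r₁, …, rₙ ∈ ℝ² be nonzero points pairwise strictly closer to the origin than to each other, listed in counterclockwise order, and let θᵢ ∈ (0, 2π) be the angle from rᵢ to r_{i+1} (indices mod n, so Σθᵢ = 2π). If θᵢ ∈ (π/3, π/2) for some i, then the ratio tᵢ = |r_{i+1}|/|rᵢ| satisfies 2 cos θᵢ < tᵢ < 1/(2 cos θᵢ). -/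
open Real

/-- Let `z₁, …, zₙ` be nonzero planar points (identified with `ℂ`), pairwise strictly
closer to the origin than to each other, listed in counterclockwise order with angular
increments `θᵢ ∈ (0, 2π)` summing to `2π` (so that `z_{i+1}` is obtained from `zᵢ` by a
counterclockwise rotation by `θᵢ` and a radial scaling). If `θᵢ ∈ (π/3, π/2)` then
`2 cos θᵢ < ‖z_{i+1}‖/‖zᵢ‖ < 1/(2 cos θᵢ)`. -/
theorem ratio_bounds_of_ccw_config (n : ℕ) [NeZero n] (z : Fin n → ℂ) (θ : Fin n → ℝ)
    (hz : ∀ i, z i ≠ 0)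
    (hclose : ∀ i j, i ≠ j → ‖z i - z j‖ > max ‖z i‖ ‖z j‖)
    (hθ : ∀ i, θ i ∈ Set.Ioo 0 (2 * π))
    (hsum : ∑ i, θ i = 2 * π)
    (hrot : ∀ i, z (i + 1) =
      (((‖z (i + 1)‖ / ‖z i‖ : ℝ) : ℂ) * Complex.exp ((θ i : ℂ) * Complex.I)) * z i)
    (i : Fin n) (hi : θ i ∈ Set.Ioo (π / 3) (π / 2)) :
    2 * cos (θ i) < ‖z (i + 1)‖ / ‖z i‖ ∧ ‖z (i + 1)‖ / ‖z i‖ < 1 / (2 * cos (θ i)) := by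
  have hpi := Real.pi_pos
  -- i + 1 ≠ i
  have hne : i + 1 ≠ i := by
    intro h
    have h1 : (1 : Fin n) = 0 := by
      have := congrArg (· - i) h
      simpa [add_sub_cancel_right] using this
    have hn1 : n = 1 := by
      rwa [Fin.one_eq_zero_iff] at h1
    subst hn1
    have : θ i = 2 * π := by
      have := hsum
      simpa [Fin.sum_univ_one, Subsingleton.elim (0 : Fin 1) i] using this
    have := hi.2
    linarith
  set a := ‖z i‖ with ha_def
  set b := ‖z (i + 1)‖ with hb_def
  have ha : 0 < a := norm_pos_iff.mpr (hz i)
  have hb : 0 < b := norm_pos_iff.mpr (hz (i + 1))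
  set t := b / a with ht_def
  have ht : 0 < t := div_pos hb ha
  have hcos : 0 < Real.cos (θ i) :=
    Real.cos_pos_of_mem_Ioo ⟨by nlinarith [hi.1], hi.2⟩
  -- norm of difference
  have hdiff : z (i + 1) - z i = (((t : ℝ) : ℂ) * Complex.exp ((θ i : ℂ) * Complex.I) - 1) * z i := by
    rw [hrot i]; ring
  have hw : ((t : ℝ) : ℂ) * Complex.exp ((θ i : ℂ) * Complex.I) - 1 =
      Complex.ofReal (t * Real.cos (θ i) - 1) + Complex.ofReal (t * Real.sin (θ i)) * Complex.I := by
    rw [Complex.exp_mul_I, ← Complex.ofReal_cos, ← Complex.ofReal_sin]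
    push_cast
    ring
  have hnormsq : ‖z (i + 1) - z i‖ ^ 2 = (t ^ 2 - 2 * t * Real.cos (θ i) + 1) * a ^ 2 := by
    rw [hdiff, norm_mul, mul_pow, hw]
    have : ‖Complex.ofReal (t * Real.cos (θ i) - 1) + Complex.ofReal (t * Real.sin (θ i)) * Complex.I‖ ^ 2
        = (t * Real.cos (θ i) - 1) ^ 2 + (t * Real.sin (θ i)) ^ 2 := by
      rw [Complex.sq_norm]
      simpa using Complex.normSq_add_mul_I (t * Real.cos (θ i) - 1) (t * Real.sin (θ i))
    rw [this, ← ha_def]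
    have hs := Real.sin_sq_add_cos_sq (θ i)
    linear_combination a ^ 2 * t ^ 2 * hs
  have hclose' := hclose (i + 1) i hne
  have hma : ‖z (i + 1) - z i‖ > a := lt_of_le_of_lt (le_max_right b a) hclose'
  have hmb : ‖z (i + 1) - z i‖ > b := lt_of_le_of_lt (le_max_left b a) hclose'
  have hma2 : a ^ 2 < ‖z (i + 1) - z i‖ ^ 2 := by nlinarith [norm_nonneg (z (i+1) - z i)]
  have hmb2 : b ^ 2 < ‖z (i + 1) - z i‖ ^ 2 := by nlinarith [norm_nonneg (z (i+1) - z i)]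
  have hba : t * a = b := div_mul_cancel₀ b ha.ne'
  constructor
  · -- 2 cos θ < t : from a² < m² = (t² - 2t cos + 1) a²
    rw [hnormsq] at hma2
    nlinarith [mul_pos ht (mul_pos ha ha), mul_pos ha ha]
  · -- t < 1/(2 cos θ) : from b² < m²
    rw [hnormsq] at hmb2
    have htb : b ^ 2 = t ^ 2 * a ^ 2 := by rw [← hba]; ring
    rw [lt_div_iff₀ (by positivity)]
    nlinarith [mul_pos ha ha, mul_pos hcos (mul_pos ha ha)]
end
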